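/- arXiv:1709.08211 — 4 statements merged into one kernel-verified Lean document; each statement's English description precedes it below -/
import Mathlib

section
/- Let A be a unital C*-algebra, let V be a subgroup of its unitary group U(A), let a ∈ A and let φ ∈ A*. Then the set {ψ(a) : ψ ∈ D_A(φ,V)} equals the closure in ℂ of the set {φ(b) : b ∈ D_A(a,V)}. -/
open scoped ComplexOrder Pointwise

noncomputable section

variable (A : Type*) [CStarAlgebra A]

/-- The functional `uφu* : x ↦ φ (u * x * star u)`. -/
def conjF (u : A) (φ : A →L[ℂ] ℂ) : A →L[ℂ] ℂ :=
  φ.comp (ContinuousLinearMap.mulLeftRight ℂ A u (star u))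

/-- The weak*-closure of a set of continuous linear functionals. -/
def wsClosure (S : Set (A →L[ℂ] ℂ)) : Set (A →L[ℂ] ℂ) :=
  StrongDual.toWeakDual ⁻¹' closure (StrongDual.toWeakDual '' S)

/-- The Dixmier set `D_A(φ, V)`: the weak*-closed convex hull of `{uφu* : u ∈ V}`. -/
def DixF (V : Set A) (φ : A →L[ℂ] ℂ) : Set (A →L[ℂ] ℂ) :=
  wsClosure A (convexHull ℝ ((fun u => conjF A u φ) '' V))

/-- The Dixmier set `D_A(a, V)`: the norm-closed convex hull of `{uau* : u ∈ V}`. -/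
def DixE (V : Set A) (a : A) : Set A :=
  closure (convexHull ℝ ((fun u => u * a * star u) '' V))

/-- The Dixmier set `D_A(φ)` (conjugation by the full unitary group `U(A)`). -/
def Dix (φ : A →L[ℂ] ℂ) : Set (A →L[ℂ] ℂ) := DixF A (unitary A : Set A) φ

/-- A functional is maximally mixed if `φ ∈ D_A(ψ)` for every `ψ ∈ D_A(φ)`. -/
def MaxMixed (φ : A →L[ℂ] ℂ) : Prop := ∀ ψ ∈ Dix A φ, φ ∈ Dix A ψ

/-- Positive functionals: `φ(x*x) ≥ 0` for all `x`. -/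
def IsPos (φ : A →L[ℂ] ℂ) : Prop := ∀ x : A, 0 ≤ φ (star x * x)

/-- States: positive functionals with `φ(1) = 1`. -/
def IsState (φ : A →L[ℂ] ℂ) : Prop := IsPos A φ ∧ φ 1 = 1

/-- Tracial functionals: `φ(xy) = φ(yx)`. -/
def IsTracial (φ : A →L[ℂ] ℂ) : Prop := ∀ x y : A, φ (x * y) = φ (y * x)

/-- Let `A` be a unital C*-algebra, `V` a subgroup of its unitary
group, `a ∈ A` and `φ ∈ A*`.  Then `{ψ(a) : ψ ∈ D_A(φ,V)}` equals the closure in `ℂ`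
of `{φ(b) : b ∈ D_A(a,V)}`. -/
theorem stmt0 (A : Type*) [CStarAlgebra A] (V : Subgroup (unitary A)) (a : A)
    (φ : A →L[ℂ] ℂ) :
    (fun ψ : A →L[ℂ] ℂ => ψ a) '' DixF A (((↑) : unitary A → A) '' (V : Set (unitary A))) φ
      = closure (φ '' DixE A (((↑) : unitary A → A) '' (V : Set (unitary A))) a) := by
  classical
  set Vs : Set A := ((↑) : unitary A → A) '' (V : Set (unitary A)) with hVs
  set Sφ : Set (A →L[ℂ] ℂ) := (fun u => conjF A u φ) '' Vs with hSφ
  set C : Set (A →L[ℂ] ℂ) := convexHull ℝ Sφ with hC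
  set Ka : Set A := (fun u => u * a * star u) '' Vs with hKa
  set KC : Set A := convexHull ℝ Ka with hKC
  -- evaluation at `a` as an ℝ-linear map
  let eva : (A →L[ℂ] ℂ) →ₗ[ℝ] ℂ :=
    { toFun := fun ψ => ψ a
      map_add' := fun ψ₁ ψ₂ => rfl
      map_smul' := fun c ψ => rfl }
  -- `φ` as an ℝ-linear map
  let φr : A →ₗ[ℝ] ℂ :=
    { toFun := fun x => φ x
      map_add' := fun x y => by simp
      map_smul' := fun c x => by simp }
  -- Step 1: eva '' C = φ '' KC
  have hstep1 : eva '' C = (⇑φ) '' KC := by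
    have h1 : eva '' C = convexHull ℝ (eva '' Sφ) := eva.image_convexHull Sφ
    have h2 : (⇑φ) '' KC = φr '' KC := rfl
    have h3 : φr '' KC = convexHull ℝ (φr '' Ka) := φr.image_convexHull Ka
    have h4 : eva '' Sφ = φr '' Ka := by
      rw [hSφ, hKa, hVs]
      simp only [Set.image_image]
      refine Set.image_congr fun v _ => ?_
      show (conjF A (↑v) φ) a = φ (↑v * a * star ↑v)
      simp [conjF, ContinuousLinearMap.mulLeftRight_apply]
    rw [h1, h2, h3, h4]
  -- Step 2: closure (φ '' DixE) = closure (φ '' KC)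
  have hstep2 : closure ((⇑φ) '' DixE A Vs a) = closure ((⇑φ) '' KC) := by
    apply subset_antisymm
    · apply closure_minimal _ isClosed_closure
      have : (⇑φ) '' closure KC ⊆ closure ((⇑φ) '' KC) :=
        image_closure_subset_closure_image φ.continuous
      exact this
    · exact closure_mono (Set.image_mono subset_closure)
  -- The weak* closure
  set Cl : Set (WeakDual ℂ A) :=
    closure (StrongDual.toWeakDual '' C) with hCl
  -- Step 3: LHS = g '' Cl where g w = w a
  have hstep3 : (fun ψ : A →L[ℂ] ℂ => ψ a) '' DixF A Vs φ
      = (fun w : WeakDual ℂ A => w a) '' Cl := by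
    have hsurj : Function.Surjective
        (StrongDual.toWeakDual : StrongDual ℂ A → WeakDual ℂ A) :=
      (StrongDual.toWeakDual (𝕜 := ℂ) (E := A)).surjective
    have : (fun ψ : A →L[ℂ] ℂ => ψ a) '' DixF A Vs φ
        = (fun w : WeakDual ℂ A => w a) ''
            (StrongDual.toWeakDual '' (StrongDual.toWeakDual ⁻¹' Cl)) := by
      rw [Set.image_image]
      rfl
    rw [this, Set.image_preimage_eq Cl hsurj]
  -- Compactness of Cl (Banach-Alaoglu)
  have hball : C ⊆ Metric.closedBall 0 ‖φ‖ := by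
    apply convexHull_min _ (convex_closedBall _ _)
    rintro ψ ⟨u, ⟨v, hv, rfl⟩, rfl⟩
    rw [Metric.mem_closedBall, dist_zero_right]
    have hone : ‖(1 : A)‖ ≤ 1 := by
      have := CStarRing.norm_star_mul_self (x := (1 : A))
      simp only [star_one, one_mul] at this
      nlinarith [norm_nonneg (1 : A)]
    have hu : ‖(v : A)‖ * ‖star (v : A)‖ ≤ 1 := by
      have := CStarRing.norm_star_mul_self (x := (v : A))
      rw [Unitary.coe_star_mul_self] at this
      rw [norm_star]
      nlinarith
    calc ‖conjF A (↑v) φ‖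
        ≤ ‖φ‖ * ‖ContinuousLinearMap.mulLeftRight ℂ A (↑v) (star ↑v)‖ :=
          ContinuousLinearMap.opNorm_comp_le _ _
      _ ≤ ‖φ‖ * (‖(v : A)‖ * ‖star (v : A)‖) :=
          mul_le_mul_of_nonneg_left
            (ContinuousLinearMap.opNorm_mulLeftRight_apply_apply_le ℂ A _ _) (norm_nonneg _)
      _ ≤ ‖φ‖ * 1 := mul_le_mul_of_nonneg_left hu (norm_nonneg _)
      _ = ‖φ‖ := mul_one _
  have hcompB : IsCompact (WeakDual.toStrongDual ⁻¹' Metric.closedBall (0 : StrongDual ℂ A) ‖φ‖) :=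
    WeakDual.isCompact_closedBall 0 ‖φ‖
  have hsubB : StrongDual.toWeakDual '' C
      ⊆ WeakDual.toStrongDual ⁻¹' Metric.closedBall (0 : StrongDual ℂ A) ‖φ‖ := by
    rintro w ⟨ψ, hψ, rfl⟩
    exact hball hψ
  have hclB : IsClosed (WeakDual.toStrongDual ⁻¹' Metric.closedBall (0 : StrongDual ℂ A) ‖φ‖) :=
    hcompB.isClosed
  have hCl_sub : Cl ⊆ WeakDual.toStrongDual ⁻¹' Metric.closedBall (0 : StrongDual ℂ A) ‖φ‖ :=
    closure_minimal hsubB hclB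
  have hCl_compact : IsCompact Cl := hcompB.of_isClosed_subset isClosed_closure hCl_sub
  -- Step 4: g '' Cl = closure (g '' (toWeakDual '' C))
  have hgcont : Continuous fun w : WeakDual ℂ A => w a := WeakDual.eval_continuous a
  have hgC : (fun w : WeakDual ℂ A => w a) '' (StrongDual.toWeakDual '' C) = eva '' C := by
    rw [Set.image_image]; rfl
  have hstep4 : (fun w : WeakDual ℂ A => w a) '' Cl = closure (eva '' C) := by
    apply subset_antisymm
    · rw [← hgC]
      exact image_closure_subset_closure_image hgcont
    · apply closure_minimal
      · rw [← hgC]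
        exact Set.image_mono subset_closure
      · exact (hCl_compact.image hgcont).isClosed
  rw [hstep3, hstep4, hstep1, hstep2]
end
end

section
/- Let A be a unital C*-algebra and let φ ∈ A*_+. Suppose that for every self-adjoint a ∈ A and every ε > 0 there exists a maximally mixed φ' ∈ A*_+ such that φ − φ' is positive and |φ(a) − φ'(a)| < ε. Then φ is maximally mixed. -/
open scoped ComplexOrder Pointwise

noncomputable section

variable (A : Type*) [CStarAlgebra A]

/-! ### Auxiliary lemmas -/

section Aux

variable {B : Type*} [CStarAlgebra B]

lemma isPos_im (f : B →L[ℂ] ℂ) (hf : IsPos B f) (x : B) : (f (star x * x)).im = 0 :=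
  ((Complex.le_def.mp (hf x)).2).symm

lemma isPos_re (f : B →L[ℂ] ℂ) (hf : IsPos B f) (x : B) : 0 ≤ (f (star x * x)).re :=
  (Complex.le_def.mp (hf x)).1

lemma isPos_herm (f : B →L[ℂ] ℂ) (hf : IsPos B f) (x : B) :
    f (star x) = (starRingEnd ℂ) (f x) := by
  have e1 : star (x + 1) * (x + 1) = star x * x + (star x + x + 1) := by
    simp [star_add, add_mul, mul_add]; abel
  have e2 : star (x + Complex.I • 1) * (x + Complex.I • 1)
      = star x * x + (Complex.I • star x - Complex.I • x + 1) := by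
    simp [star_add, star_smul, add_mul, mul_add, smul_mul_assoc, mul_smul_comm, smul_smul,
      Complex.I_mul_I, sub_mul, mul_sub]
    abel
  have h1 := isPos_im f hf (x + 1)
  have h2 := isPos_im f hf (x + Complex.I • 1)
  have h0 := isPos_im f hf 1
  rw [e1] at h1
  rw [e2] at h2
  simp only [map_add, map_sub, map_smul, Complex.add_im, Complex.sub_im, Complex.smul_im,
    Complex.smul_re, star_one, one_mul, isPos_im f hf x, smul_eq_mul, Complex.mul_im,
    Complex.I_re, Complex.I_im] at h1 h2 h0
  rw [Complex.ext_iff, Complex.conj_re, Complex.conj_im]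
  constructor <;> linarith

lemma isPos_app_nonneg (f : B →L[ℂ] ℂ) (hf : IsPos B f) :
    letI : PartialOrder B := CStarAlgebra.spectralOrder B
    haveI : StarOrderedRing B := CStarAlgebra.spectralOrderedRing B
    ∀ {a : B}, 0 ≤ a → 0 ≤ f a := by
  letI : PartialOrder B := CStarAlgebra.spectralOrder B
  haveI : StarOrderedRing B := CStarAlgebra.spectralOrderedRing B
  intro a ha
  rw [StarOrderedRing.nonneg_iff] at ha
  induction ha using AddSubmonoid.closure_induction with
  | mem x hx => obtain ⟨b, rfl⟩ := hx; exact hf b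
  | zero => simp
  | add x y _ _ hx hy => rw [map_add]; exact add_nonneg hx hy

/-- The positive-semidefinite sesquilinear form attached to a positive functional. -/
def posCore (f : B →L[ℂ] ℂ) (hf : IsPos B f) : PreInnerProductSpace.Core ℂ B where
  inner x y := f (star x * y)
  conj_inner_symm x y := by
    show (starRingEnd ℂ) (f (star y * x)) = f (star x * y)
    rw [← isPos_herm f hf (star y * x), star_mul, star_star]
  re_inner_nonneg x := isPos_re f hf x
  add_left x y z := by
    show f (star (x + y) * z) = f (star x * z) + f (star y * z)
    rw [star_add, add_mul, map_add]
  smul_left x y r := by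
    show f (star (r • x) * y) = (starRingEnd ℂ) r * f (star x * y)
    rw [star_smul, smul_mul_assoc, map_smul, Complex.star_def, smul_eq_mul]

/-- Cauchy–Schwarz for a positive functional. -/
lemma isPos_cauchy_schwarz (f : B →L[ℂ] ℂ) (hf : IsPos B f) (y : B) :
    ‖f y‖ * ‖f y‖ ≤ (f 1).re * (f (star y * y)).re := by
  have h := @InnerProductSpace.Core.inner_mul_inner_self_le ℂ B _ _ _ (posCore f hf) 1 y
  have e1 : (@inner ℂ B (InnerProductSpace.Core.toPreInner' (c := posCore f hf)) 1 y)
      = f y := by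
    show f (star 1 * y) = f y
    rw [star_one, one_mul]
  have e2 : (@inner ℂ B (InnerProductSpace.Core.toPreInner' (c := posCore f hf)) y 1)
      = f (star y) := by
    show f (star y * 1) = f (star y)
    rw [mul_one]
  have e3 : (@inner ℂ B (InnerProductSpace.Core.toPreInner' (c := posCore f hf)) 1 1)
      = f 1 := by
    show f (star 1 * 1) = f 1
    rw [star_one, one_mul]
  have e4 : (@inner ℂ B (InnerProductSpace.Core.toPreInner' (c := posCore f hf)) y y)
      = f (star y * y) := rfl
  rw [e1, e2, e3, e4, isPos_herm f hf y] at h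
  simpa using h

/-- The norm of a positive functional is bounded by its value at `1`. -/
lemma isPos_norm_le (f : B →L[ℂ] ℂ) (hf : IsPos B f) : ‖f‖ ≤ (f 1).re := by
  letI : PartialOrder B := CStarAlgebra.spectralOrder B
  haveI : StarOrderedRing B := CStarAlgebra.spectralOrderedRing B
  have h1 : (0:ℝ) ≤ (f 1).re := by simpa using isPos_re f hf 1
  refine f.opNorm_le_bound h1 fun y => ?_
  have key : (f (star y * y)).re ≤ ‖y‖ ^ 2 * (f 1).re := by
    have hle : star y * y ≤ algebraMap ℝ B (‖y‖ ^ 2) := by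
      have := IsSelfAdjoint.le_algebraMap_norm_self (a := star y * y)
        (IsSelfAdjoint.star_mul_self y)
      rwa [CStarRing.norm_star_mul_self, ← pow_two] at this
    have hmono := isPos_app_nonneg f hf (sub_nonneg.mpr hle)
    rw [map_sub] at hmono
    have := (Complex.le_def.mp hmono).1
    have halg : f (algebraMap ℝ B (‖y‖ ^ 2)) = (‖y‖ ^ 2 : ℝ) * f 1 := by
      rw [Algebra.algebraMap_eq_smul_one, ContinuousLinearMap.map_smul_of_tower,
        Complex.real_smul]
    rw [halg] at this
    simp only [Complex.sub_re, Complex.zero_re, Complex.mul_re, Complex.ofReal_re,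
      Complex.ofReal_im] at this
    nlinarith [this]
  have hcs := isPos_cauchy_schwarz f hf y
  have h2 : ‖f y‖ * ‖f y‖ ≤ ((f 1).re * ‖y‖) * ((f 1).re * ‖y‖) := by
    calc ‖f y‖ * ‖f y‖ ≤ (f 1).re * (f (star y * y)).re := hcs
    _ ≤ (f 1).re * (‖y‖ ^ 2 * (f 1).re) := mul_le_mul_of_nonneg_left key h1
    _ = ((f 1).re * ‖y‖) * ((f 1).re * ‖y‖) := by ring
  nlinarith [norm_nonneg (f y), h2, mul_nonneg h1 (norm_nonneg y)]

lemma conjF_norm_le {u : B} (hu : u ∈ unitary B) (χ : B →L[ℂ] ℂ) :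
    ‖conjF B u χ‖ ≤ ‖χ‖ := by
  rcases subsingleton_or_nontrivial B with hB | hB
  · have : conjF B u χ = χ := by
      ext x; exact congrArg χ (Subsingleton.elim _ _)
    rw [this]
  · refine ContinuousLinearMap.opNorm_le_bound _ (norm_nonneg χ) fun x => ?_
    have hx : conjF B u χ x = χ (u * x * star u) := by
      simp [conjF, ContinuousLinearMap.mulLeftRight_apply]
    rw [hx]
    calc ‖χ (u * x * star u)‖ ≤ ‖χ‖ * ‖u * x * star u‖ := χ.le_opNorm _
    _ ≤ ‖χ‖ * ‖x‖ := by
        gcongr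
        calc ‖u * x * star u‖ ≤ ‖u * x‖ * ‖star u‖ := norm_mul_le _ _
        _ ≤ ‖u‖ * ‖x‖ * ‖star u‖ := by gcongr; exact norm_mul_le _ _
        _ = ‖x‖ := by
            rw [norm_star, CStarRing.norm_of_mem_unitary hu]; ring

lemma conjF_split (u : B) (χ χ' : B →L[ℂ] ℂ) :
    conjF B u χ = conjF B u χ' + conjF B u (χ - χ') := by
  unfold conjF
  rw [← ContinuousLinearMap.add_comp, add_sub_cancel]

lemma hull_pert {χ χ' : B →L[ℂ] ℂ} {ε : ℝ} (hε : ‖χ - χ'‖ ≤ ε) :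
    convexHull ℝ ((fun u => conjF B u χ) '' (unitary B : Set B)) ⊆
      convexHull ℝ ((fun u => conjF B u χ') '' (unitary B : Set B)) +
        Metric.closedBall 0 ε := by
  refine convexHull_min ?_ ((convex_convexHull ℝ _).add (convex_closedBall 0 ε))
  rintro _ ⟨u, hu, rfl⟩
  show conjF B u χ ∈ _
  rw [conjF_split u χ χ']
  refine Set.add_mem_add (subset_convexHull ℝ _ ⟨u, hu, rfl⟩) ?_
  rw [mem_closedBall_zero_iff]
  exact (conjF_norm_le hu _).trans hε

lemma dix_pert {χ χ' : B →L[ℂ] ℂ} {ε : ℝ} (hε : ‖χ - χ'‖ ≤ ε) {x : B →L[ℂ] ℂ}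
    (hx : x ∈ Dix B χ) : ∃ y ∈ Dix B χ', ‖x - y‖ ≤ ε := by
  classical
  set ι := (StrongDual.toWeakDual : (B →L[ℂ] ℂ) ≃ₗ[ℂ] WeakDual ℂ B) with hι
  set H := convexHull ℝ ((fun u => conjF B u χ') '' (unitary B : Set B)) with hH
  set K : Set (WeakDual ℂ B) := WeakDual.toStrongDual ⁻¹' Metric.closedBall 0 ε with hK
  have hKc : IsCompact K := WeakDual.isCompact_closedBall (𝕜 := ℂ) (E := B) 0 ε
  have hCc : IsClosed (closure (⇑ι '' H) + K) :=
    IsClosed.add_right_of_isCompact isClosed_closure hKc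
  have hsub : ⇑ι '' convexHull ℝ ((fun u => conjF B u χ) '' (unitary B : Set B)) ⊆
      closure (⇑ι '' H) + K := by
    rintro _ ⟨w, hw, rfl⟩
    obtain ⟨y, hy, b, hb, rfl⟩ := hull_pert hε hw
    exact Set.add_mem_add (subset_closure (Set.mem_image_of_mem _ hy))
      (by exact hb)
  have hx' : ι x ∈ closure (⇑ι '' H) + K :=
    closure_minimal hsub hCc hx
  obtain ⟨yw, hyw, k, hk, hsum⟩ := hx'
  refine ⟨WeakDual.toStrongDual yw, hyw, ?_⟩
  have : x - WeakDual.toStrongDual yw = WeakDual.toStrongDual k := by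
    have : ι x = yw + k := hsum.symm
    have := congrArg WeakDual.toStrongDual this
    exact sub_eq_iff_eq_add'.mpr this
  rw [this]
  simpa [hK, mem_closedBall_zero_iff] using hk

lemma dix_isClosed (χ : B →L[ℂ] ℂ) : IsClosed (Dix B χ) :=
  isClosed_closure.preimage NormedSpace.Dual.toWeakDual_continuous

end Aux

/-- Let `A` be a unital C*-algebra and `φ ∈ A*₊`.  If for every
self-adjoint `a ∈ A` and every `ε > 0` there is a maximally mixed `φ' ∈ A*₊` with
`φ - φ'` positive and `|φ(a) - φ'(a)| < ε`, then `φ` is maximally mixed. -/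
theorem stmt4 (A : Type*) [CStarAlgebra A] (φ : A →L[ℂ] ℂ) (hφ : IsPos A φ)
    (h : ∀ a : A, IsSelfAdjoint a → ∀ ε : ℝ, 0 < ε →
      ∃ φ' : A →L[ℂ] ℂ, MaxMixed A φ' ∧ IsPos A φ' ∧ IsPos A (φ - φ') ∧
        ‖φ a - φ' a‖ < ε) :
    MaxMixed A φ := by
  intro ψ hψ
  rw [← (dix_isClosed ψ).closure_eq]
  rw [Metric.mem_closure_iff]
  intro ε hε
  obtain ⟨φ', hmax, _, hpos, hdist⟩ := h 1 (IsSelfAdjoint.one A) (ε/3) (by positivity)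
  have hnorm : ‖φ - φ'‖ ≤ ε/3 := by
    refine (isPos_norm_le _ hpos).trans ?_
    have h1 : ((φ - φ') 1).re ≤ ‖(φ - φ') 1‖ := Complex.re_le_norm _
    have h2 : (φ - φ') 1 = φ 1 - φ' 1 := rfl
    rw [h2] at h1
    exact h1.trans hdist.le
  obtain ⟨ψ', hψ', hdψ⟩ := dix_pert hnorm hψ
  have hφ'ψ' : φ' ∈ Dix A ψ' := hmax ψ' hψ'
  have hnorm' : ‖ψ' - ψ‖ ≤ ε/3 := by rwa [norm_sub_rev] at hdψ
  obtain ⟨χ, hχ, hdχ⟩ := dix_pert hnorm' hφ'ψ'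
  refine ⟨χ, hχ, ?_⟩
  calc dist φ χ = ‖φ - χ‖ := dist_eq_norm φ χ
  _ ≤ ‖φ - φ'‖ + ‖φ' - χ‖ := by
      have := norm_add_le (φ - φ') (φ' - χ)
      simpa using this
  _ ≤ ε/3 + ε/3 := add_le_add hnorm hdχ
  _ < ε := by linarith
end
end

section
/- Let A be a unital C*-algebra with the Dixmier property. Then: (a) for every bounded linear functional μ on the center Z(A) there exists a maximally mixed φ ∈ A* whose restriction to Z(A) equals μ; (b) if φ, ψ ∈ A* are maximally mixed and agree on Z(A), then D_A(φ) = D_A(ψ). Consequently, the map φ ↦ φ|_{Z(A)} induces a bijection between equivalence classes of maximally mixed functionals (φ ~ ψ iff D_A(φ) = D_A(ψ)) and bounded functionals on Z(A). -/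
open scoped ComplexOrder Pointwise

noncomputable section

variable (A : Type*) [CStarAlgebra A]

/-- The restriction of a functional `φ ∈ A*` to the center `Z(A)`. -/
def restrZ (φ : A →L[ℂ] ℂ) : (Subalgebra.center ℂ A) →L[ℂ] ℂ :=
  { toFun := fun z => φ (z : A)
    map_add' := fun x y => by simp
    map_smul' := fun c x => by simp
    cont := φ.continuous.comp continuous_subtype_val }


-- ===================== Auxiliary development =====================

namespace Stmt16

open NormedSpace Set Filter Topology StrongDual WeakDual

variable {B : Type*} [CStarAlgebra B]

lemma conjF_apply (u : B) (φ : B →L[ℂ] ℂ) (x : B) : conjF B u φ x = φ (u * x * star u) := rfl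

lemma norm_conj_le {u : B} (hu : u ∈ unitary B) (x : B) : ‖u * x * star u‖ ≤ ‖x‖ := by
  rcases subsingleton_or_nontrivial B with h | h
  · simp [Subsingleton.elim (u * x * star u) x]
  · calc ‖u * x * star u‖ ≤ ‖u * x‖ * ‖star u‖ := norm_mul_le _ _
      _ ≤ ‖u‖ * ‖x‖ * ‖star u‖ := by gcongr; exact norm_mul_le _ _
      _ = ‖x‖ := by rw [norm_star, CStarRing.norm_of_mem_unitary hu]; ring

lemma conjF_comp (u v : B) (φ : B →L[ℂ] ℂ) :
    conjF B u (conjF B v φ) = conjF B (v * u) φ := by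
  ext x; simp [conjF_apply, star_mul, mul_assoc]

lemma conj_central {u z : B} (hu : u ∈ unitary B) (hz : z ∈ Subalgebra.center ℂ B) :
    u * z * star u = z := by
  rw [Subalgebra.mem_center_iff.mp hz u, mul_assoc, Unitary.mul_star_self_of_mem hu, mul_one]

/-- The generating set of the Dixmier set of a functional. -/
def DixS (φ : B →L[ℂ] ℂ) : Set (B →L[ℂ] ℂ) := (fun u => conjF B u φ) '' (unitary B : Set B)

lemma mem_dix_iff {φ ψ : B →L[ℂ] ℂ} :
    ψ ∈ Dix B φ ↔ toWeakDual ψ ∈ closure (toWeakDual '' convexHull ℝ (DixS φ)) := Iff.rfl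

/-- Conjugation as an `ℝ`-linear map on the dual. -/
def conjFL (u : B) : (B →L[ℂ] ℂ) →ₗ[ℝ] (B →L[ℂ] ℂ) where
  toFun φ := conjF B u φ
  map_add' φ ψ := by ext x; simp [conjF_apply]
  map_smul' r φ := by ext x; simp [conjF_apply]

lemma continuous_conjFW (u : B) :
    Continuous (fun ψ : WeakDual ℂ B =>
      (toWeakDual (conjF B u (toStrongDual ψ)) : WeakDual ℂ B)) := by
  apply WeakDual.continuous_of_continuous_eval
  intro y
  exact WeakDual.eval_continuous (u * y * star u)

/-- `toWeakDual` as an `ℝ`-linear map. -/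
def tWℝ : (B →L[ℂ] ℂ) →ₗ[ℝ] WeakDual ℂ B :=
  { toFun := fun φ => toWeakDual φ
    map_add' := fun _ _ => rfl
    map_smul' := fun _ _ => rfl }

lemma mem_dix_self (φ : B →L[ℂ] ℂ) : φ ∈ Dix B φ := by
  rw [mem_dix_iff]
  have h1 : φ ∈ DixS φ := ⟨1, Submonoid.one_mem _, by ext x; simp [conjF_apply]⟩
  exact subset_closure ⟨φ, subset_convexHull ℝ _ h1, rfl⟩

lemma dix_conjF_mem {φ ψ : B →L[ℂ] ℂ} {u : B} (hu : u ∈ unitary B) (h : ψ ∈ Dix B φ) :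
    conjF B u ψ ∈ Dix B φ := by
  have himg : (fun χ : WeakDual ℂ B => (toWeakDual (conjF B u (toStrongDual χ)) : WeakDual ℂ B)) ''
      (toWeakDual '' convexHull ℝ (DixS φ)) ⊆ toWeakDual '' convexHull ℝ (DixS φ) := by
    rintro _ ⟨_, ⟨χ, hχ, rfl⟩, rfl⟩
    refine ⟨conjF B u χ, ?_, rfl⟩
    have : conjF B u χ = conjFL u χ := rfl
    rw [this]
    have h2 : conjFL u χ ∈ (conjFL (B := B) u) '' (convexHull ℝ (DixS φ)) := ⟨χ, hχ, rfl⟩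
    rw [LinearMap.image_convexHull] at h2
    refine convexHull_mono ?_ h2
    rintro _ ⟨_, ⟨v, hv, rfl⟩, rfl⟩
    exact ⟨v * u, mul_mem hv hu, (conjF_comp u v φ).symm⟩
  have hc := image_closure_subset_closure_image (s := toWeakDual '' convexHull ℝ (DixS φ))
    (continuous_conjFW (B := B) u)
  rw [mem_dix_iff] at h ⊢
  have hmem : (toWeakDual (conjF B u (toStrongDual (toWeakDual ψ))) : WeakDual ℂ B) ∈
      closure (toWeakDual '' convexHull ℝ (DixS φ)) := by
    refine (hc.trans (closure_mono himg)) ?_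
    exact ⟨toWeakDual ψ, h, rfl⟩
  exact hmem

lemma convex_dix (φ : B →L[ℂ] ℂ) : Convex ℝ (Dix B φ) := by
  have h1 : Convex ℝ (toWeakDual '' convexHull ℝ (DixS φ) : Set (WeakDual ℂ B)) := by
    have := (convex_convexHull ℝ (DixS φ)).linear_image (tWℝ (B := B))
    exact this
  have h2 : Convex ℝ (closure (toWeakDual '' convexHull ℝ (DixS φ)) : Set (WeakDual ℂ B)) :=
    @Convex.closure ℝ (WeakDual ℂ B) _ _ _ _ _ _ (WeakDual.instContinuousConstSMul ℝ) _ h1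
  intro x hx y hy a b ha hb hab
  have := h2 hx hy ha hb hab
  exact this

lemma dix_mono {φ τ : B →L[ℂ] ℂ} (h : τ ∈ Dix B φ) : Dix B τ ⊆ Dix B φ := by
  have hS : DixS τ ⊆ Dix B φ := by
    rintro _ ⟨u, hu, rfl⟩; exact dix_conjF_mem hu h
  have hCH : convexHull ℝ (DixS τ) ⊆ Dix B φ := convexHull_min hS (convex_dix φ)
  intro ψ hψ
  rw [mem_dix_iff] at hψ ⊢
  have him : (toWeakDual '' convexHull ℝ (DixS τ) : Set (WeakDual ℂ B)) ⊆
      closure (toWeakDual '' convexHull ℝ (DixS φ)) := by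
    rintro _ ⟨χ, hχ, rfl⟩; exact (mem_dix_iff).mp (hCH hχ)
  exact (closure_mono him).trans closure_closure.subset hψ

lemma apply_central_eq_of_mem_dix {φ σ : B →L[ℂ] ℂ} (h : σ ∈ Dix B φ) :
    ∀ z ∈ Subalgebra.center ℂ B, σ z = φ z := by
  intro z hz
  have hcl : IsClosed {w : WeakDual ℂ B | w z = φ z} :=
    IsClosed.preimage (WeakDual.eval_continuous z) isClosed_singleton
  have hconv : convexHull ℝ (DixS φ) ⊆ {ψ : B →L[ℂ] ℂ | ψ z = φ z} := by
    refine convexHull_min ?_ ?_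
    · rintro _ ⟨u, hu, rfl⟩
      simp only [mem_setOf_eq, conjF_apply, conj_central hu hz]
    · intro ψ₁ h1 ψ₂ h2 a b ha hb hab
      simp only [mem_setOf_eq] at h1 h2 ⊢
      simp [h1, h2]; rw [← add_mul, ← Complex.ofReal_add, hab, Complex.ofReal_one, one_mul]
  have hsub : (toWeakDual '' convexHull ℝ (DixS φ) : Set (WeakDual ℂ B)) ⊆
      {w : WeakDual ℂ B | w z = φ z} := by
    rintro _ ⟨χ, hχ, rfl⟩; exact hconv hχ
  have := closure_minimal hsub hcl ((mem_dix_iff).mp h)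
  exact this

lemma dix_subset_ball (φ : B →L[ℂ] ℂ) :
    (toWeakDual '' convexHull ℝ (DixS φ) : Set (WeakDual ℂ B)) ⊆
      toStrongDual ⁻¹' Metric.closedBall 0 ‖φ‖ := by
  rintro _ ⟨χ, hχ, rfl⟩
  have : convexHull ℝ (DixS φ) ⊆ Metric.closedBall (0 : B →L[ℂ] ℂ) ‖φ‖ := by
    refine convexHull_min ?_ (convex_closedBall _ _)
    rintro _ ⟨u, hu, rfl⟩
    rw [Metric.mem_closedBall, dist_zero_right]
    refine ContinuousLinearMap.opNorm_le_bound _ (norm_nonneg φ) fun x => ?_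
    calc ‖conjF B u φ x‖ ≤ ‖φ‖ * ‖u * x * star u‖ := φ.le_opNorm _
      _ ≤ ‖φ‖ * ‖x‖ := by gcongr; exact norm_conj_le hu x
  exact this hχ

lemma isCompact_dixW (φ : B →L[ℂ] ℂ) :
    IsCompact (closure (toWeakDual '' convexHull ℝ (DixS φ)) : Set (WeakDual ℂ B)) := by
  have hb := WeakDual.isCompact_closedBall (𝕜 := ℂ) (E := B) 0 ‖φ‖
  exact hb.of_isClosed_subset isClosed_closure
    (closure_minimal (dix_subset_ball φ) hb.isClosed)

lemma imW_dix (φ : B →L[ℂ] ℂ) :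
    toWeakDual '' Dix B φ = closure (toWeakDual '' convexHull ℝ (DixS φ)) := by
  apply Set.image_preimage_eq _ (toWeakDual : StrongDual ℂ B ≃ₗ[ℂ] WeakDual ℂ B).surjective

/-- Averaging operators: finite convex combinations of unitary conjugations. -/
def IsAvg (T : B → B) : Prop :=
  ∃ (ι : Type) (t : Finset ι) (w : ι → ℝ) (u : ι → B),
    (∀ i ∈ t, 0 ≤ w i) ∧ (∑ i ∈ t, w i = 1) ∧ (∀ i ∈ t, u i ∈ unitary B) ∧
      ∀ x, T x = ∑ i ∈ t, w i • (u i * x * star (u i))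

lemma isAvg_id : IsAvg (id : B → B) := by
  refine ⟨PUnit, {PUnit.unit}, fun _ => 1, fun _ => 1, by simp, by simp,
    fun _ _ => Submonoid.one_mem _, fun x => by simp⟩

lemma IsAvg.comp {T S : B → B} (hT : IsAvg T) (hS : IsAvg S) : IsAvg (T ∘ S) := by
  obtain ⟨ι, t, w, u, hw0, hw1, hu, hT⟩ := hT
  obtain ⟨κ, s, v, q, hv0, hv1, hq, hS⟩ := hS
  refine ⟨ι × κ, t ×ˢ s, fun p => w p.1 * v p.2, fun p => u p.1 * q p.2, ?_, ?_, ?_, ?_⟩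
  · rintro ⟨i, j⟩ hij
    rw [Finset.mem_product] at hij
    exact mul_nonneg (hw0 _ hij.1) (hv0 _ hij.2)
  · rw [Finset.sum_product]
    simp_rw [← Finset.mul_sum, hv1, mul_one, hw1]
  · rintro ⟨i, j⟩ hij
    rw [Finset.mem_product] at hij
    exact mul_mem (hu _ hij.1) (hq _ hij.2)
  · intro x
    rw [Function.comp_apply, hT, Finset.sum_product]
    refine Finset.sum_congr rfl fun i hi => ?_
    rw [hS, Finset.mul_sum, Finset.sum_mul, Finset.smul_sum]
    refine Finset.sum_congr rfl fun j hj => ?_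
    simp only [star_mul, smul_smul, mul_smul_comm, smul_mul_assoc]
    congr 1
    noncomm_ring

lemma IsAvg.norm_le {T : B → B} (hT : IsAvg T) (x : B) : ‖T x‖ ≤ ‖x‖ := by
  obtain ⟨ι, t, w, u, hw0, hw1, hu, hrep⟩ := hT
  rw [hrep]
  calc ‖∑ i ∈ t, w i • (u i * x * star (u i))‖ ≤ ∑ i ∈ t, ‖w i • (u i * x * star (u i))‖ :=
        norm_sum_le _ _
    _ ≤ ∑ i ∈ t, w i * ‖x‖ := by
        refine Finset.sum_le_sum fun i hi => ?_
        rw [norm_smul, Real.norm_eq_abs, abs_of_nonneg (hw0 i hi)]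
        exact mul_le_mul_of_nonneg_left (norm_conj_le (hu i hi) x) (hw0 i hi)
    _ = ‖x‖ := by rw [← Finset.sum_mul, hw1, one_mul]

lemma IsAvg.central {T : B → B} (hT : IsAvg T) {z : B} (hz : z ∈ Subalgebra.center ℂ B) :
    T z = z := by
  obtain ⟨ι, t, w, u, hw0, hw1, hu, hrep⟩ := hT
  rw [hrep]
  have : ∀ i ∈ t, w i • (u i * z * star (u i)) = w i • z := fun i hi => by
    rw [conj_central (hu i hi) hz]
  rw [Finset.sum_congr rfl this, ← Finset.sum_smul, hw1, one_smul]

lemma IsAvg.map_sub {T : B → B} (hT : IsAvg T) (x y : B) : T (x - y) = T x - T y := by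
  obtain ⟨ι, t, w, u, hw0, hw1, hu, hrep⟩ := hT
  simp only [hrep, ← Finset.sum_sub_distrib, ← smul_sub]
  refine Finset.sum_congr rfl fun i hi => ?_
  rw [mul_sub, sub_mul]

lemma exists_avg_of_mem_dixE {a z : B} (hz : z ∈ DixE B (unitary B : Set B) a) :
    ∀ ε : ℝ, 0 < ε → ∃ T : B → B, IsAvg T ∧ ‖T a - z‖ < ε := by
  intro ε hε
  obtain ⟨c, hc, hdist⟩ := Metric.mem_closure_iff.mp hz ε hε
  rw [convexHull_eq] at hc
  obtain ⟨ι, t, w, f, hw0, hw1, hf, rfl⟩ := hc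
  choose g hg hgf using fun i (hi : i ∈ t) => hf i hi
  classical
  set T : B → B := fun x => ∑ i ∈ t.attach, w i.1 • (g i.1 i.2 * x * star (g i.1 i.2))
    with hTdef
  have hAvg : IsAvg T := by
    refine ⟨{i // i ∈ t}, t.attach, fun i => w i.1, fun i => g i.1 i.2,
      fun i _ => hw0 i.1 i.2, ?_, fun i _ => hg i.1 i.2, fun x => rfl⟩
    rw [← hw1]; exact Finset.sum_attach t w
  have hTa : T a = Finset.centerMass t w f := by
    rw [Finset.centerMass_eq_of_sum_1 _ _ hw1, hTdef]
    simp only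
    rw [← Finset.sum_attach t (fun i => w i • f i)]
    refine Finset.sum_congr rfl fun i _ => ?_
    rw [← hgf i.1 i.2]
  refine ⟨T, hAvg, ?_⟩
  rw [show ‖T a - z‖ = dist z (T a) from by rw [dist_comm, dist_eq_norm], hTa]
  exact hdist

lemma exists_avg_list (hDP : ∀ a : B, ∃ z ∈ DixE B (unitary B : Set B) a,
      z ∈ Subalgebra.center ℂ B)
    (l : List B) (ε : ℝ) (hε : 0 < ε) :
    ∃ T : B → B, IsAvg T ∧ ∀ a ∈ l, ∃ z ∈ Subalgebra.center ℂ B, ‖T a - z‖ < ε := by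
  induction l with
  | nil => exact ⟨id, isAvg_id, by simp⟩
  | cons a l ih =>
    obtain ⟨T, hT, hTl⟩ := ih
    obtain ⟨z, hzD, hzc⟩ := hDP (T a)
    obtain ⟨S, hS, hSz⟩ := exists_avg_of_mem_dixE hzD ε hε
    refine ⟨S ∘ T, hS.comp hT, ?_⟩
    intro b hb
    rcases List.mem_cons.mp hb with rfl | hb
    · exact ⟨z, hzc, hSz⟩
    · obtain ⟨z', hz'c, hz'⟩ := hTl b hb
      refine ⟨z', hz'c, ?_⟩
      have : S (T b) - z' = S (T b - z') := by rw [hS.map_sub, hS.central hz'c]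
      rw [Function.comp_apply, this]
      exact lt_of_le_of_lt (hS.norm_le _) hz'

lemma comp_avg_mem_convexHull (φ : B →L[ℂ] ℂ) {T : B → B} (hT : IsAvg T) :
    ∃ ψ ∈ convexHull ℝ (DixS φ), ∀ x, ψ x = φ (T x) := by
  obtain ⟨ι, t, w, u, hw0, hw1, hu, hrep⟩ := hT
  classical
  refine ⟨∑ i ∈ t, w i • conjF B (u i) φ, ?_, ?_⟩
  · have : t.centerMass w (fun i => conjF B (u i) φ) ∈ convexHull ℝ (DixS φ) :=
      Finset.centerMass_mem_convexHull t hw0 (by rw [hw1]; norm_num)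
        (fun i hi => ⟨u i, hu i hi, rfl⟩)
    rwa [Finset.centerMass_eq_of_sum_1 _ _ hw1] at this
  · intro x
    rw [hrep, map_sum]
    simp only [ContinuousLinearMap.sum_apply, ContinuousLinearMap.smul_apply, conjF_apply]
    refine Finset.sum_congr rfl fun i hi => ?_
    rw [ContinuousLinearMap.map_smul_of_tower]

lemma exists_restr_extension (μ : (Subalgebra.center ℂ B) →L[ℂ] ℂ) :
    ∃ φ : B →L[ℂ] ℂ, restrZ B φ = μ := by
  let p : Subspace ℂ B := Subalgebra.toSubmodule (Subalgebra.center ℂ B)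
  let j : p →L[ℂ] (Subalgebra.center ℂ B) :=
    { toFun := fun x => ⟨x.1, x.2⟩
      map_add' := fun x y => rfl
      map_smul' := fun c x => rfl
      cont := Continuous.subtype_mk continuous_subtype_val _ }
  obtain ⟨g, hg, _⟩ := exists_extension_norm_eq p (μ.comp j)
  refine ⟨g, ?_⟩
  ext z
  exact (hg ⟨z.1, z.2⟩).trans rfl

lemma exists_maxMixed_mem (φ0 : B →L[ℂ] ℂ) : ∃ σ ∈ Dix B φ0, MaxMixed B σ := by
  classical
  set S : Set (Set (B →L[ℂ] ℂ)) := {K | ∃ σ ∈ Dix B φ0, K = Dix B σ} with hS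
  have hchaincond : ∀ c ⊆ S, IsChain (· ⊆ ·) c → c.Nonempty →
      ∃ lb ∈ S, ∀ s ∈ c, lb ⊆ s := by
    intro c hcS hchain hcne
    obtain ⟨K0, hK0⟩ := hcne
    set c' : Set (Set (WeakDual ℂ B)) := (fun K => toWeakDual '' K) '' c with hc'
    haveI : Nonempty c' := ⟨⟨toWeakDual '' K0, ⟨K0, hK0, rfl⟩⟩⟩
    have hdir : DirectedOn (· ⊇ ·) c' := by
      rintro _ ⟨K1, hK1, rfl⟩ _ ⟨K2, hK2, rfl⟩
      rcases hchain.total hK1 hK2 with h | h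
      · exact ⟨toWeakDual '' K1, ⟨K1, hK1, rfl⟩, subset_refl _, Set.image_mono h⟩
      · exact ⟨toWeakDual '' K2, ⟨K2, hK2, rfl⟩, Set.image_mono h, subset_refl _⟩
    have hprop : ∀ U ∈ c', U.Nonempty ∧ IsCompact U ∧ IsClosed U := by
      rintro _ ⟨K, hK, rfl⟩
      obtain ⟨σ, hσ, rfl⟩ := hcS hK
      simp only
      rw [imW_dix]
      refine ⟨⟨toWeakDual σ, ?_⟩, isCompact_dixW σ, isClosed_closure⟩
      rw [← imW_dix]
      exact ⟨σ, mem_dix_self σ, rfl⟩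
    obtain ⟨w, hw⟩ := IsCompact.nonempty_sInter_of_directed_nonempty_isCompact_isClosed
      hdir (fun U hU => (hprop U hU).1) (fun U hU => (hprop U hU).2.1)
      (fun U hU => (hprop U hU).2.2)
    set τ : B →L[ℂ] ℂ := toStrongDual w with hτ
    have hτmem : ∀ K ∈ c, τ ∈ K := by
      intro K hK
      have : w ∈ toWeakDual '' K := Set.mem_sInter.mp hw _ ⟨K, hK, rfl⟩
      obtain ⟨χ, hχ, hχw⟩ := this
      have : χ = τ := by rw [hτ, ← hχw]; rfl
      rwa [← this]
    have hτ0 : τ ∈ Dix B φ0 := by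
      obtain ⟨σ0, hσ0, rfl⟩ := hcS hK0
      exact dix_mono hσ0 (hτmem _ hK0)
    refine ⟨Dix B τ, ⟨τ, hτ0, rfl⟩, ?_⟩
    intro K hK
    obtain ⟨σ, hσ, rfl⟩ := hcS hK
    exact dix_mono (hτmem _ hK)
  obtain ⟨m, hmsub, hmin⟩ := zorn_superset_nonempty S hchaincond (Dix B φ0)
    ⟨φ0, mem_dix_self φ0, rfl⟩
  obtain ⟨σ, hσ, rfl⟩ := hmin.prop
  refine ⟨σ, hσ, ?_⟩
  intro ψ hψ
  have hψ0 : ψ ∈ Dix B φ0 := dix_mono hσ hψ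
  have hmem : Dix B ψ ∈ S := ⟨ψ, hψ0, rfl⟩
  exact hmin.2 hmem (dix_mono hψ) (mem_dix_self σ)

lemma dix_inter_nonempty
    (hDP : ∀ a : B, ∃ z ∈ DixE B (unitary B : Set B) a, z ∈ Subalgebra.center ℂ B)
    {φ ψ : B →L[ℂ] ℂ} (hres : ∀ z ∈ Subalgebra.center ℂ B, φ z = ψ z) :
    (Dix B φ ∩ Dix B ψ).Nonempty := by
  classical
  have hsel : ∀ i : Finset B × ℕ, ∃ T : B → B, IsAvg T ∧
      ∀ a ∈ i.1, ∃ z ∈ Subalgebra.center ℂ B, ‖T a - z‖ < 1 / (i.2 + 1) := by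
    intro i
    obtain ⟨T, hT, hTl⟩ := exists_avg_list hDP i.1.toList (1 / (i.2 + 1)) (by positivity)
    exact ⟨T, hT, fun a ha => hTl a (Finset.mem_toList.mpr ha)⟩
  choose T hTavg hTapp using hsel
  choose σ hσmem hσeq using fun i => comp_avg_mem_convexHull φ (hTavg i)
  choose τ hτmem hτeq using fun i => comp_avg_mem_convexHull ψ (hTavg i)
  set Kφ := (closure (toWeakDual '' convexHull ℝ (DixS φ)) : Set (WeakDual ℂ B))
  set Kψ := (closure (toWeakDual '' convexHull ℝ (DixS ψ)) : Set (WeakDual ℂ B))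
  set N : Finset B × ℕ → WeakDual ℂ B × WeakDual ℂ B :=
    fun i => (toWeakDual (σ i), toWeakDual (τ i)) with hN
  have hNmem : ∀ i, N i ∈ Kφ ×ˢ Kψ := fun i =>
    ⟨subset_closure ⟨σ i, hσmem i, rfl⟩, subset_closure ⟨τ i, hτmem i, rfl⟩⟩
  have hmap : Filter.map N atTop ≤ Filter.principal (Kφ ×ˢ Kψ) :=
    Filter.le_principal_iff.mpr (Filter.mem_map.mpr (Filter.univ_mem' hNmem))
  obtain ⟨x, hxK, hxcl⟩ := ((isCompact_dixW φ).prod (isCompact_dixW ψ)).exists_mapClusterPt hmap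
  have heq : x.1 = x.2 := by
    apply DFunLike.ext
    intro a
    set g : WeakDual ℂ B × WeakDual ℂ B → ℂ := fun p => p.1 a - p.2 a with hg
    have hgcont : Continuous g := ((WeakDual.eval_continuous a).comp continuous_fst).sub
      ((WeakDual.eval_continuous a).comp continuous_snd)
    have hclg : MapClusterPt (g x) atTop (g ∘ N) := hxcl.continuousAt_comp hgcont.continuousAt
    have htend : Filter.Tendsto (g ∘ N) atTop (nhds (0 : ℂ)) := by
      have hbound : ∀ᶠ i in (atTop : Filter (Finset B × ℕ)),
          ‖(g ∘ N) i‖ ≤ (‖φ‖ + ‖ψ‖) * (1 / (i.2 + 1)) := by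
        rw [Filter.eventually_atTop]
        refine ⟨({a}, 0), fun i hi => ?_⟩
        have ha : a ∈ i.1 := Finset.singleton_subset_iff.mp hi.1
        obtain ⟨z, hzc, hz⟩ := hTapp i a ha
        have h1 : (g ∘ N) i = φ (T i a) - ψ (T i a) := by
          have e1 : (toWeakDual (σ i) : WeakDual ℂ B) a = σ i a := rfl
          have e2 : (toWeakDual (τ i) : WeakDual ℂ B) a = τ i a := rfl
          simp only [Function.comp_apply, hN, hg]
          rw [e1, e2, hσeq i a, hτeq i a]
        have h2 : φ (T i a) - ψ (T i a) = φ (T i a - z) - ψ (T i a - z) := by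
          rw [map_sub, map_sub, hres z hzc]; ring
        rw [h1, h2]
        calc ‖φ (T i a - z) - ψ (T i a - z)‖ ≤ ‖φ (T i a - z)‖ + ‖ψ (T i a - z)‖ :=
              norm_sub_le _ _
          _ ≤ ‖φ‖ * ‖T i a - z‖ + ‖ψ‖ * ‖T i a - z‖ := by
              gcongr
              · exact φ.le_opNorm _
              · exact ψ.le_opNorm _
          _ = (‖φ‖ + ‖ψ‖) * ‖T i a - z‖ := by ring
          _ ≤ (‖φ‖ + ‖ψ‖) * (1 / (i.2 + 1)) :=
              mul_le_mul_of_nonneg_left (le_of_lt hz) (by positivity)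
      have hz : Filter.Tendsto (fun i : Finset B × ℕ => (‖φ‖ + ‖ψ‖) * (1 / (i.2 + 1)))
          atTop (nhds 0) := by
        have h1 : Filter.Tendsto (fun n : ℕ => (‖φ‖ + ‖ψ‖) * (1 / (n + 1)))
            atTop (nhds 0) := by
          have := tendsto_one_div_add_atTop_nhds_zero_nat (𝕜 := ℝ)
          have := this.const_mul (‖φ‖ + ‖ψ‖)
          simpa using this
        have h2 : Filter.Tendsto (Prod.snd : Finset B × ℕ → ℕ) atTop atTop := by
          rw [← Filter.prod_atTop_atTop_eq]
          exact Filter.tendsto_snd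
        exact h1.comp h2
      exact squeeze_zero_norm' hbound hz
    have hne : (nhds (g x) ⊓ Filter.map (g ∘ N) atTop).NeBot := hclg
    have : (nhds (g x) ⊓ nhds (0 : ℂ)).NeBot := hne.mono (inf_le_inf_left _ htend)
    have := eq_of_nhds_neBot this
    rw [hg] at this
    simpa [sub_eq_zero] using this
  refine ⟨toStrongDual x.1, mem_dix_iff.mpr ?_, mem_dix_iff.mpr ?_⟩
  · exact hxK.1
  · have : toWeakDual (toStrongDual x.1) = x.2 := heq
    rw [this]; exact hxK.2

end Stmt16

/-- Let `A` be a unital C*-algebra with the Dixmier property.  Then: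
(a) every bounded linear functional on the center `Z(A)` is the restriction of some
maximally mixed functional on `A`; (b) two maximally mixed functionals agreeing on
`Z(A)` generate the same Dixmier set.  Consequently `φ ↦ φ|_{Z(A)}` induces a bijection
between equivalence classes of maximally mixed functionals and bounded functionals
on `Z(A)`. -/
theorem stmt16 (A : Type*) [CStarAlgebra A]
    (hDP : ∀ a : A, ∃ z ∈ DixE A (unitary A : Set A) a, z ∈ Subalgebra.center ℂ A) :
    (∀ μ : (Subalgebra.center ℂ A) →L[ℂ] ℂ,
        ∃ φ : A →L[ℂ] ℂ, MaxMixed A φ ∧ restrZ A φ = μ) ∧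
    (∀ φ ψ : A →L[ℂ] ℂ, MaxMixed A φ → MaxMixed A ψ →
        restrZ A φ = restrZ A ψ → Dix A φ = Dix A ψ) := by
  constructor
  · intro μ
    obtain ⟨φ0, hφ0⟩ := Stmt16.exists_restr_extension μ
    obtain ⟨σ, hσ, hmax⟩ := Stmt16.exists_maxMixed_mem φ0
    refine ⟨σ, hmax, ?_⟩
    rw [← hφ0]
    ext z
    exact Stmt16.apply_central_eq_of_mem_dix hσ z.1 z.2
  · intro φ ψ hφ hψ hres
    have hres' : ∀ z ∈ Subalgebra.center ℂ A, φ z = ψ z := by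
      intro z hz
      exact DFunLike.congr_fun hres (⟨z, hz⟩ : Subalgebra.center ℂ A)
    obtain ⟨σ, hσφ, hσψ⟩ := Stmt16.dix_inter_nonempty hDP hres'
    have h1 : Dix A φ = Dix A σ :=
      Set.Subset.antisymm (Stmt16.dix_mono (hφ σ hσφ)) (Stmt16.dix_mono hσφ)
    have h2 : Dix A ψ = Dix A σ :=
      Set.Subset.antisymm (Stmt16.dix_mono (hψ σ hσψ)) (Stmt16.dix_mono hσψ)
    rw [h1, h2]
end
end

section
/- Let A be a unital C*-algebra with the Dixmier property and let φ ∈ A*_+. Then φ is maximally mixed if and only if φ(a) ≤ sup{φ(z) : z ∈ D_A(a) ∩ Z(A)} for every positive element a ∈ A. -/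
open scoped ComplexOrder Pointwise

noncomputable section

variable (A : Type*) [CStarAlgebra A]

namespace Aux17

open Set NormedSpace

variable {A : Type*} [CStarAlgebra A]

lemma conjF_apply (u : A) (φ : A →L[ℂ] ℂ) (x : A) : conjF A u φ x = φ (u * x * star u) := rfl

lemma conjF_one (φ : A →L[ℂ] ℂ) : conjF A 1 φ = φ := by
  ext x; simp [conjF_apply]

lemma norm_unitary_conj {u : A} (hu : u ∈ unitary A) (x : A) : ‖u * x * star u‖ = ‖x‖ := by
  rw [CStarRing.norm_mul_mem_unitary _ (Unitary.star_mem hu), CStarRing.norm_mem_unitary_mul _ hu]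

lemma unitary_conj_central {u z : A} (hu : u ∈ unitary A) (hz : z ∈ Subalgebra.center ℂ A) :
    u * z * star u = z := by
  rw [Subalgebra.mem_center_iff.mp hz u, mul_assoc, Unitary.mul_star_self_of_mem hu, mul_one]

/-- An averaging operator: a convex combination of unitary conjugations. -/
structure Avg (A : Type*) [CStarAlgebra A] where
  ι : Type
  s : Finset ι
  w : ι → ℝ
  v : ι → A
  hw : ∀ i ∈ s, 0 ≤ w i
  hw1 : ∑ i ∈ s, w i = 1
  hv : ∀ i ∈ s, v i ∈ unitary A

/-- The averaging operator as a continuous linear map. -/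
def Avg.clm (γ : Avg A) : A →L[ℂ] A :=
  ∑ i ∈ γ.s, γ.w i • ContinuousLinearMap.mulLeftRight ℂ A (γ.v i) (star (γ.v i))

lemma Avg.clm_apply (γ : Avg A) (x : A) :
    γ.clm x = ∑ i ∈ γ.s, γ.w i • (γ.v i * x * star (γ.v i)) := by
  simp [Avg.clm, ContinuousLinearMap.sum_apply, ContinuousLinearMap.smul_apply,
    ContinuousLinearMap.mulLeftRight_apply]

/-- A trivial averaging operator. -/
def Avg.id (A : Type*) [CStarAlgebra A] : Avg A where
  ι := ℕ
  s := {0}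
  w := fun _ => 1
  v := fun _ => 1
  hw := fun _ _ => zero_le_one
  hw1 := Finset.sum_singleton _ _
  hv := fun _ _ => one_mem (unitary A)

/-- Composition of averaging operators. -/
def Avg.comp (γ δ : Avg A) : Avg A where
  ι := γ.ι × δ.ι
  s := γ.s ×ˢ δ.s
  w := fun p => γ.w p.1 * δ.w p.2
  v := fun p => γ.v p.1 * δ.v p.2
  hw := fun p hp => by
    have h := Finset.mem_product.mp hp
    exact mul_nonneg (γ.hw _ h.1) (δ.hw _ h.2)
  hw1 := by
    rw [Finset.sum_product]
    simp_rw [← Finset.mul_sum, δ.hw1, mul_one]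
    exact γ.hw1
  hv := fun p hp => by
    have h := Finset.mem_product.mp hp
    exact mul_mem (γ.hv _ h.1) (δ.hv _ h.2)

lemma Avg.comp_clm (γ δ : Avg A) (x : A) : (γ.comp δ).clm x = γ.clm (δ.clm x) := by
  rw [Avg.clm_apply, Avg.clm_apply]
  show ∑ p ∈ γ.s ×ˢ δ.s, _ = _
  rw [Finset.sum_product]
  refine Finset.sum_congr rfl fun i _ => ?_
  have h1 : γ.v i * (∑ j ∈ δ.s, δ.w j • (δ.v j * x * star (δ.v j))) * star (γ.v i)
      = ∑ j ∈ δ.s, δ.w j • (γ.v i * (δ.v j * x * star (δ.v j)) * star (γ.v i)) := by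
    rw [Finset.mul_sum, Finset.sum_mul]
    exact Finset.sum_congr rfl fun j _ => by rw [mul_smul_comm, smul_mul_assoc]
  rw [Avg.clm_apply δ x] at *
  rw [h1, Finset.smul_sum]
  refine Finset.sum_congr rfl fun j _ => ?_
  rw [smul_smul]
  congr 1
  show γ.v i * δ.v j * x * star (γ.v i * δ.v j) = _
  rw [star_mul]
  simp only [mul_assoc]

lemma Avg.norm_clm_apply_le (γ : Avg A) (x : A) : ‖γ.clm x‖ ≤ ‖x‖ := by
  rw [Avg.clm_apply]
  refine (norm_sum_le _ _).trans ?_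
  have : ∀ i ∈ γ.s, ‖γ.w i • (γ.v i * x * star (γ.v i))‖ = γ.w i * ‖x‖ := fun i hi => by
    rw [norm_smul, Real.norm_eq_abs, abs_of_nonneg (γ.hw i hi), norm_unitary_conj (γ.hv i hi)]
  rw [Finset.sum_congr rfl this, ← Finset.sum_mul, γ.hw1, one_mul]

lemma Avg.clm_central (γ : Avg A) {z : A} (hz : z ∈ Subalgebra.center ℂ A) : γ.clm z = z := by
  rw [Avg.clm_apply]
  have : ∀ i ∈ γ.s, γ.w i • (γ.v i * z * star (γ.v i)) = γ.w i • z := fun i hi => by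
    rw [unitary_conj_central (γ.hv i hi) hz]
  rw [Finset.sum_congr rfl this, ← Finset.sum_smul, γ.hw1, one_smul]

/-- Representation of elements of convex hulls of unitary orbits by averaging operators. -/
lemma exists_avg_rep {E : Type*} [AddCommGroup E] [Module ℝ E] {f : A → E} {x : E}
    (hx : x ∈ convexHull ℝ (f '' (unitary A : Set A))) :
    ∃ γ : Avg A, x = ∑ i ∈ γ.s, γ.w i • f (γ.v i) := by
  rw [convexHull_eq] at hx
  obtain ⟨ι, t, w, z, h0, h1, hmem, hcm⟩ := hx
  classical
  have hch : ∀ i, i ∈ t → ∃ u, u ∈ unitary A ∧ f u = z i := by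
    intro i hi
    obtain ⟨u, hu, he⟩ := hmem i hi
    exact ⟨u, hu, he⟩
  choose v hv hfv using hch
  let v' : ι → A := fun i => if h : i ∈ t then v i h else 1
  refine ⟨⟨ι, t, w, v', h0, h1, fun i hi => by simp only [v', dif_pos hi]; exact hv i hi⟩, ?_⟩
  rw [← hcm, Finset.centerMass_eq_of_sum_1 _ _ h1]
  refine Finset.sum_congr rfl fun i hi => ?_
  simp only [v', dif_pos hi, hfv i hi]

lemma Avg.comp_clm_eq_sum (φ : A →L[ℂ] ℂ) (γ : Avg A) :
    φ.comp γ.clm = ∑ i ∈ γ.s, γ.w i • conjF A (γ.v i) φ := by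
  ext x
  show φ (γ.clm x) = _
  rw [Avg.clm_apply, map_sum]
  rw [ContinuousLinearMap.sum_apply]
  refine Finset.sum_congr rfl fun i _ => ?_
  rw [ContinuousLinearMap.smul_apply, ContinuousLinearMap.map_smul_of_tower]
  rfl

lemma comp_mem_hull (φ : A →L[ℂ] ℂ) (γ : Avg A) :
    φ.comp γ.clm ∈ convexHull ℝ ((fun u => conjF A u φ) '' (unitary A : Set A)) := by
  rw [Avg.comp_clm_eq_sum]
  exact (convex_convexHull ℝ _).sum_mem γ.hw γ.hw1
    (fun i hi => subset_convexHull ℝ _ (mem_image_of_mem _ (γ.hv i hi)))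

lemma exists_avg_functional {φ χ : A →L[ℂ] ℂ}
    (hχ : χ ∈ convexHull ℝ ((fun u => conjF A u φ) '' (unitary A : Set A))) :
    ∃ γ : Avg A, χ = φ.comp γ.clm := by
  obtain ⟨γ, hγ⟩ := exists_avg_rep hχ
  exact ⟨γ, by rw [hγ, Avg.comp_clm_eq_sum]⟩

lemma exists_avg_elem {a x : A}
    (hx : x ∈ convexHull ℝ ((fun u => u * a * star u) '' (unitary A : Set A))) :
    ∃ γ : Avg A, x = γ.clm a := by
  obtain ⟨γ, hγ⟩ := exists_avg_rep hx
  exact ⟨γ, by rw [hγ, Avg.clm_apply]⟩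

/-! ### Properties of `DixE` -/

lemma DixE_convex (a : A) : Convex ℝ (DixE A (unitary A : Set A) a) :=
  (convex_convexHull ℝ _).closure

lemma DixE_isClosed (a : A) : IsClosed (DixE A (unitary A : Set A) a) := isClosed_closure

lemma self_mem_DixE (a : A) : a ∈ DixE A (unitary A : Set A) a :=
  subset_closure (subset_convexHull ℝ _ ⟨1, one_mem (unitary A), by simp⟩)

lemma DixE_norm_le {a x : A} (hx : x ∈ DixE A (unitary A : Set A) a) : ‖x‖ ≤ ‖a‖ := by
  have hsub : DixE A (unitary A : Set A) a ⊆ Metric.closedBall 0 ‖a‖ := by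
    refine closure_minimal (convexHull_min ?_ (convex_closedBall _ _)) Metric.isClosed_closedBall
    rintro _ ⟨u, hu, rfl⟩
    rw [Metric.mem_closedBall, dist_zero_right, norm_unitary_conj hu]
  simpa [Metric.mem_closedBall, dist_zero_right] using hsub hx

lemma conj_mem_DixE {a x u : A} (hu : u ∈ unitary A)
    (hx : x ∈ DixE A (unitary A : Set A) a) :
    u * x * star u ∈ DixE A (unitary A : Set A) a := by
  have hsub : DixE A (unitary A : Set A) a ⊆
      {y : A | u * y * star u ∈ DixE A (unitary A : Set A) a} := by
    refine closure_minimal (convexHull_min ?_ ?_) ?_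
    · rintro _ ⟨u', hu', rfl⟩
      refine subset_closure (subset_convexHull ℝ _ ⟨u * u', mul_mem hu hu', ?_⟩)
      show u * u' * a * star (u * u') = _
      rw [star_mul]
      simp only [mul_assoc]
    · have hlin : IsLinearMap ℝ (fun y : A => u * y * star u) := by
        constructor
        · intro x y; rw [mul_add, add_mul]
        · intro c x; rw [mul_smul_comm, smul_mul_assoc]
      exact (DixE_convex a).is_linear_preimage hlin
    · have hcont : Continuous (fun y : A => u * y * star u) := by
        exact ((continuous_mul_left u).comp continuous_id).mul continuous_const
      exact (DixE_isClosed a).preimage hcont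
  exact hsub hx

lemma avg_mem_DixE {a x : A} (γ : Avg A) (hx : x ∈ DixE A (unitary A : Set A) a) :
    γ.clm x ∈ DixE A (unitary A : Set A) a := by
  rw [Avg.clm_apply]
  exact (DixE_convex a).sum_mem γ.hw γ.hw1 (fun i hi => conj_mem_DixE (γ.hv i hi) hx)

lemma DixE_subset {a b : A} (hb : b ∈ DixE A (unitary A : Set A) a) :
    DixE A (unitary A : Set A) b ⊆ DixE A (unitary A : Set A) a := by
  refine closure_minimal (convexHull_min ?_ (DixE_convex a)) (DixE_isClosed a)
  rintro _ ⟨u, hu, rfl⟩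
  exact conj_mem_DixE hu hb

/-! ### Properties of `Dix` (weak-* side) -/

lemma mem_Dix_of_mem_hull {φ χ : A →L[ℂ] ℂ}
    (hχ : χ ∈ convexHull ℝ ((fun u => conjF A u φ) '' (unitary A : Set A))) :
    χ ∈ Dix A φ := by
  show StrongDual.toWeakDual χ ∈ closure (StrongDual.toWeakDual ''
    (convexHull ℝ ((fun u => conjF A u φ) '' (unitary A : Set A))))
  exact subset_closure (mem_image_of_mem _ hχ)

lemma mem_closure_of_mem_Dix {φ χ : A →L[ℂ] ℂ} (hχ : χ ∈ Dix A φ) :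
    StrongDual.toWeakDual χ ∈ closure (StrongDual.toWeakDual ''
      (convexHull ℝ ((fun u => conjF A u φ) '' (unitary A : Set A)))) := hχ

lemma conjF_mem_Dix (φ : A →L[ℂ] ℂ) {u : A} (hu : u ∈ unitary A) : conjF A u φ ∈ Dix A φ :=
  mem_Dix_of_mem_hull (subset_convexHull ℝ _ (mem_image_of_mem _ hu))

lemma self_mem_Dix (φ : A →L[ℂ] ℂ) : φ ∈ Dix A φ := by
  have := conjF_mem_Dix φ (one_mem (unitary A))
  rwa [conjF_one] at this

lemma Dix_agree_center {φ χ : A →L[ℂ] ℂ} (hχ : χ ∈ Dix A φ) {z : A}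
    (hz : z ∈ Subalgebra.center ℂ A) : χ z = φ z := by
  have hmap : MapsTo (fun ψ : WeakDual ℂ A => ψ z)
      (StrongDual.toWeakDual ''
        (convexHull ℝ ((fun u => conjF A u φ) '' (unitary A : Set A)))) {φ z} := by
    rintro _ ⟨χ', hχ', rfl⟩
    obtain ⟨γ, rfl⟩ := exists_avg_functional hχ'
    show φ (γ.clm z) = φ z
    rw [γ.clm_central hz]
  have := map_mem_closure (WeakDual.eval_continuous z) (mem_closure_of_mem_Dix hχ) hmap
  simpa using this

lemma conjF_isPos {φ : A →L[ℂ] ℂ} (hφ : IsPos A φ) (u : A) : IsPos A (conjF A u φ) := by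
  intro x
  have : u * (star x * x) * star u = star (x * star u) * (x * star u) := by
    rw [star_mul, star_star]
    simp only [mul_assoc]
  rw [conjF_apply, this]
  exact hφ _

lemma hull_isPos {φ χ : A →L[ℂ] ℂ} (hφ : IsPos A φ)
    (hχ : χ ∈ convexHull ℝ ((fun u => conjF A u φ) '' (unitary A : Set A))) :
    IsPos A χ := by
  intro x
  obtain ⟨γ, rfl⟩ := exists_avg_functional hχ
  rw [Avg.comp_clm_eq_sum]
  rw [ContinuousLinearMap.sum_apply]
  refine Finset.sum_nonneg fun i hi => ?_
  rw [ContinuousLinearMap.smul_apply, Complex.real_smul]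
  exact mul_nonneg (by exact_mod_cast γ.hw i hi) (conjF_isPos hφ (γ.v i) x)

lemma Dix_isPos {φ χ : A →L[ℂ] ℂ} (hφ : IsPos A φ) (hχ : χ ∈ Dix A φ) : IsPos A χ := by
  intro x
  have hK : IsClosed {z : ℂ | 0 ≤ z} := by
    have : {z : ℂ | 0 ≤ z} = Complex.re ⁻¹' Ici 0 ∩ Complex.im ⁻¹' {0} := by
      ext z
      simp [Complex.le_def, eq_comm]
    rw [this]
    exact (isClosed_Ici.preimage Complex.continuous_re).inter
      (isClosed_singleton.preimage Complex.continuous_im)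
  have hmap : MapsTo (fun ψ : WeakDual ℂ A => ψ (star x * x))
      (StrongDual.toWeakDual ''
        (convexHull ℝ ((fun u => conjF A u φ) '' (unitary A : Set A)))) {z : ℂ | 0 ≤ z} := by
    rintro _ ⟨χ', hχ', rfl⟩
    exact hull_isPos hφ hχ' x
  have := map_mem_closure (WeakDual.eval_continuous (star x * x)) (mem_closure_of_mem_Dix hχ) hmap
  rwa [hK.closure_eq] at this

lemma hull_norm_le {φ χ : A →L[ℂ] ℂ}
    (hχ : χ ∈ convexHull ℝ ((fun u => conjF A u φ) '' (unitary A : Set A))) : ‖χ‖ ≤ ‖φ‖ := by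
  obtain ⟨γ, rfl⟩ := exists_avg_functional hχ
  have h1 : ‖γ.clm‖ ≤ 1 :=
    ContinuousLinearMap.opNorm_le_bound _ zero_le_one
      (fun x => by rw [one_mul]; exact γ.norm_clm_apply_le x)
  calc ‖φ.comp γ.clm‖ ≤ ‖φ‖ * ‖γ.clm‖ := ContinuousLinearMap.opNorm_comp_le _ _
    _ ≤ ‖φ‖ * 1 := mul_le_mul_of_nonneg_left h1 (norm_nonneg φ)
    _ = ‖φ‖ := mul_one _

/-! ### Positive functionals -/

lemma exists_star_mul_self_eq {y : A} (hy : IsSelfAdjoint y) :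
    ∃ x : A, star x * x = algebraMap ℝ A ‖y‖ + y := by
  rcases subsingleton_or_nontrivial A with hs | hn
  · exact ⟨0, Subsingleton.elim _ _⟩
  refine ⟨cfc (fun t : ℝ => Real.sqrt (‖y‖ + t)) y, ?_⟩
  have hsa : IsSelfAdjoint (cfc (fun t : ℝ => Real.sqrt (‖y‖ + t)) y) := cfc_predicate _ y
  rw [hsa.star_eq, ← cfc_mul _ _ y]
  have hspec : ∀ t ∈ spectrum ℝ y, Real.sqrt (‖y‖ + t) * Real.sqrt (‖y‖ + t) = ‖y‖ + t := by
    intro t ht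
    refine Real.mul_self_sqrt ?_
    have h2 := abs_le.mp ((Real.norm_eq_abs t) ▸ spectrum.norm_le_norm_of_mem ht)
    linarith [h2.1]
  rw [cfc_congr hspec, cfc_const_add _ _ _, cfc_id' ℝ y]

lemma isPos_im_eq_zero {χ : A →L[ℂ] ℂ} (hχ : IsPos A χ) {y : A} (hy : IsSelfAdjoint y) :
    (χ y).im = 0 := by
  have key : ∀ w : A, (∃ x : A, star x * x = w) → (χ w).im = 0 := by
    rintro _ ⟨x, rfl⟩
    exact ((Complex.le_def.mp (hχ x)).2).symm
  have h1 : (χ (algebraMap ℝ A ‖y‖ + y)).im = 0 := key _ (exists_star_mul_self_eq hy)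
  have h2 : (χ (algebraMap ℝ A ‖y‖ - y)).im = 0 := by
    obtain ⟨x, hx⟩ := exists_star_mul_self_eq hy.neg
    refine key _ ⟨x, ?_⟩
    rw [hx, norm_neg, sub_eq_add_neg]
  have h3 : χ (algebraMap ℝ A ‖y‖ + y) - χ (algebraMap ℝ A ‖y‖ - y) = χ y + χ y := by
    rw [← map_sub, ← map_add]
    congr 1
    abel
  have h4 := congrArg Complex.im h3
  rw [Complex.sub_im, Complex.add_im, h1, h2] at h4
  linarith

lemma isPos_re_apply_eq {χ : A →L[ℂ] ℂ} (hχ : IsPos A χ) (a₀ : A) :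
    (χ a₀).re = (χ ((2⁻¹ : ℂ) • (a₀ + star a₀))).re := by
  set y₁ : A := (2⁻¹ : ℂ) • (a₀ + star a₀) with hy₁def
  set y₂ : A := ((-(2⁻¹) : ℂ) * Complex.I) • (a₀ - star a₀) with hy₂def
  have hy₂ : IsSelfAdjoint y₂ := by
    rw [hy₂def, IsSelfAdjoint, star_smul, star_sub, star_star]
    have h1 : (star a₀ - a₀ : A) = (-1 : ℂ) • (a₀ - star a₀) := by
      rw [neg_one_smul, neg_sub]
    rw [h1, smul_smul]
    congr 1
    simp [Complex.ext_iff]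
  have hdec : a₀ = y₁ + Complex.I • y₂ := by
    rw [hy₁def, hy₂def, smul_smul]
    have h2 : Complex.I * ((-(2⁻¹) : ℂ) * Complex.I) = (2⁻¹ : ℂ) := by
      rw [mul_comm (-(2⁻¹ : ℂ)) Complex.I, ← mul_assoc, Complex.I_mul_I]
      ring
    rw [h2, ← smul_add]
    have h3 : (a₀ + star a₀) + (a₀ - star a₀) = (2 : ℂ) • a₀ := by
      rw [two_smul]; abel
    rw [h3, smul_smul]
    norm_num
  have hI : χ (Complex.I • y₂) = Complex.I * χ y₂ := by rw [map_smul, smul_eq_mul]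
  conv_lhs => rw [hdec, map_add, hI]
  rw [Complex.add_re, Complex.mul_re, Complex.I_re, Complex.I_im, isPos_im_eq_zero hχ hy₂]
  ring

/-! ### Continuous functionals on the weak-* dual are evaluations -/

lemma exists_eval_eq (f : WeakDual ℂ A →L[ℂ] ℂ) : ∃ a : A, ∀ ψ : WeakDual ℂ A, f ψ = ψ a := by
  classical
  have hb : (nhds (0 : WeakDual ℂ A)).HasBasis
      (fun U : Set (WeakDual ℂ A) => U ∈ (topDualPairing ℂ A).toSeminormFamily.basisSets)
      _root_.id :=
    LinearMap.hasBasis_weakBilin (topDualPairing ℂ A)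
  have hf0 : f ⁻¹' Metric.ball 0 1 ∈ nhds (0 : WeakDual ℂ A) := by
    have h1 : Metric.ball (0 : ℂ) 1 ∈ nhds (f 0) := by
      rw [map_zero]
      exact Metric.ball_mem_nhds _ one_pos
    exact f.continuous.continuousAt.preimage_mem_nhds h1
  rw [hb.mem_iff] at hf0
  obtain ⟨U, hU, hUsub⟩ := hf0
  obtain ⟨s, r, hr, rfl⟩ := (SeminormFamily.basisSets_iff _).mp hU
  have hker : ∀ ψ : WeakDual ℂ A, (∀ x ∈ s, ψ x = 0) → f ψ = 0 := by
    intro ψ hψ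
    by_contra hne
    have hpos : 0 < ‖f ψ‖ := norm_pos_iff.mpr hne
    have hmem : ((2 / ‖f ψ‖ : ℝ) : ℂ) • ψ ∈
        Seminorm.ball (s.sup (topDualPairing ℂ A).toSeminormFamily) 0 r := by
      refine (Seminorm.mem_ball_zero _).mpr ?_
      refine Seminorm.finset_sup_apply_lt hr (fun x hx => ?_)
      have : (topDualPairing ℂ A).toSeminormFamily x (((2 / ‖f ψ‖ : ℝ) : ℂ) • ψ) = 0 := by
        show ‖(topDualPairing ℂ A) (((2 / ‖f ψ‖ : ℝ) : ℂ) • ψ) x‖ = 0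
        show ‖((2 / ‖f ψ‖ : ℝ) : ℂ) • (topDualPairing ℂ A) ψ x‖ = 0
        have : (topDualPairing ℂ A) ψ x = 0 := hψ x hx
        rw [this, smul_zero, norm_zero]
      exact lt_of_eq_of_lt this hr
    have h2 := hUsub hmem
    rw [Set.mem_preimage, map_smul, Metric.mem_ball, dist_zero_right] at h2
    rw [norm_smul, Complex.norm_real, Real.norm_eq_abs, abs_of_nonneg (by positivity)] at h2
    rw [div_mul_cancel₀ 2 hpos.ne'] at h2
    linarith
  let L : {x // x ∈ s} → (WeakDual ℂ A) →ₗ[ℂ] ℂ := fun x =>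
    { toFun := fun ψ => ψ x.1
      map_add' := fun ψ χ => rfl
      map_smul' := fun c ψ => rfl }
  have hle : (⨅ i, LinearMap.ker (L i)) ≤ LinearMap.ker (f : WeakDual ℂ A →ₗ[ℂ] ℂ) := by
    intro ψ hψ
    rw [LinearMap.mem_ker]
    refine hker ψ fun x hx => ?_
    have := (Submodule.mem_iInf _).mp hψ ⟨x, hx⟩
    rwa [LinearMap.mem_ker] at this
  have hspan := mem_span_of_iInf_ker_le_ker hle
  rw [Submodule.mem_span_range_iff_exists_fun] at hspan
  obtain ⟨c, hc⟩ := hspan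
  refine ⟨∑ i, c i • (i.1 : A), fun ψ => ?_⟩
  have h3 := LinearMap.congr_fun hc ψ
  rw [LinearMap.coe_sum, Finset.sum_apply] at h3
  have h4 : ψ (∑ i, c i • (i.1 : A)) = ∑ i, c i • ψ i.1 := by
    rw [map_sum]
    exact Finset.sum_congr rfl fun i _ => by rw [map_smul]
  rw [h4]
  rw [show f ψ = (f : WeakDual ℂ A →ₗ[ℂ] ℂ) ψ from rfl, ← h3]
  exact Finset.sum_congr rfl fun i _ => by rw [LinearMap.smul_apply]; rfl

/-! ### Simultaneous Dixmier approximation -/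

lemma sim_dixmier
    (hDP : ∀ x : A, ∃ z ∈ DixE A (unitary A : Set A) x, z ∈ Subalgebra.center ℂ A)
    {a : A} {ι : Type*} (t : Finset ι) (b : ι → A)
    (hb : ∀ i ∈ t, b i ∈ DixE A (unitary A : Set A) a) {ε : ℝ} (hε : 0 < ε) :
    ∃ γ : Avg A, ∀ i ∈ t, ∃ z, z ∈ DixE A (unitary A : Set A) a ∧
      z ∈ Subalgebra.center ℂ A ∧ ‖γ.clm (b i) - z‖ < ε := by
  classical
  induction t using Finset.cons_induction with
  | empty => exact ⟨Avg.id A, fun i hi => absurd hi (Finset.notMem_empty i)⟩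
  | cons j t' hj ih =>
    obtain ⟨γ', hγ'⟩ := ih (fun i hi => hb i (Finset.mem_cons_of_mem hi))
    have hbj : b j ∈ DixE A (unitary A : Set A) a := hb j (Finset.mem_cons_self j t')
    have hx : γ'.clm (b j) ∈ DixE A (unitary A : Set A) a := avg_mem_DixE γ' hbj
    obtain ⟨z, hzD, hzC⟩ := hDP (γ'.clm (b j))
    have hzDa : z ∈ DixE A (unitary A : Set A) a := by
      have h1 : DixE A (unitary A : Set A) (γ'.clm (b j)) ⊆ DixE A (unitary A : Set A) a :=
        DixE_subset hx
      exact h1 hzD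
    obtain ⟨y, hy, hdy⟩ := Metric.mem_closure_iff.mp hzD ε hε
    obtain ⟨δ, rfl⟩ := exists_avg_elem hy
    refine ⟨δ.comp γ', fun i hi => ?_⟩
    rcases Finset.mem_cons.mp hi with rfl | hi'
    · refine ⟨z, hzDa, hzC, ?_⟩
      rw [Avg.comp_clm]
      rw [← dist_eq_norm]
      rw [dist_comm]
      exact hdy
    · obtain ⟨zi, hziD, hziC, hzin⟩ := hγ' i hi'
      refine ⟨zi, hziD, hziC, ?_⟩
      rw [Avg.comp_clm]
      calc ‖δ.clm (γ'.clm (b i)) - zi‖ = ‖δ.clm (γ'.clm (b i) - zi)‖ := by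
            rw [map_sub, δ.clm_central hziC]
        _ ≤ ‖γ'.clm (b i) - zi‖ := δ.norm_clm_apply_le _
        _ < ε := hzin

/-! ### The forward direction -/

lemma forward
    (hDP : ∀ x : A, ∃ z ∈ DixE A (unitary A : Set A) x, z ∈ Subalgebra.center ℂ A)
    (φ : A →L[ℂ] ℂ) (hmm : MaxMixed A φ) (a : A) :
    (φ a).re ≤ sSup ((fun z => (φ z).re) ''
      (DixE A (unitary A : Set A) a ∩ (Subalgebra.center ℂ A : Set A))) := by
  classical
  set β := sSup ((fun z => (φ z).re) ''
    (DixE A (unitary A : Set A) a ∩ (Subalgebra.center ℂ A : Set A))) with hβ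
  have hbdd : BddAbove ((fun z => (φ z).re) ''
      (DixE A (unitary A : Set A) a ∩ (Subalgebra.center ℂ A : Set A))) := by
    refine ⟨‖φ‖ * ‖a‖, ?_⟩
    rintro _ ⟨z, ⟨hz, _⟩, rfl⟩
    calc (φ z).re ≤ ‖φ z‖ := Complex.re_le_norm _
      _ ≤ ‖φ‖ * ‖z‖ := φ.le_opNorm z
      _ ≤ ‖φ‖ * ‖a‖ := mul_le_mul_of_nonneg_left (DixE_norm_le hz) (norm_nonneg φ)
  -- the compact set `Dix φ` inside the weak-* dual
  set T : Set (WeakDual ℂ A) := StrongDual.toWeakDual ''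
    (convexHull ℝ ((fun u => conjF A u φ) '' (unitary A : Set A))) with hT
  have hTsub : T ⊆ WeakDual.toStrongDual ⁻¹' Metric.closedBall 0 ‖φ‖ := by
    rintro _ ⟨χ, hχ, rfl⟩
    show χ ∈ Metric.closedBall 0 ‖φ‖
    rw [Metric.mem_closedBall, dist_zero_right]
    exact hull_norm_le hχ
  have hKcl : IsClosed (WeakDual.toStrongDual ⁻¹' Metric.closedBall (0 : A →L[ℂ] ℂ) ‖φ‖) :=
    (WeakDual.isCompact_closedBall (𝕜 := ℂ) (x' := 0) (r := ‖φ‖)).isClosed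
  have hclT : IsCompact (closure T) :=
    (WeakDual.isCompact_closedBall (𝕜 := ℂ) (x' := 0) (r := ‖φ‖)).of_isClosed_subset isClosed_closure
      (closure_minimal hTsub hKcl)
  -- the family of closed constraints
  let Z : {b : A // b ∈ DixE A (unitary A : Set A) a} × ℕ → Set (WeakDual ℂ A) :=
    fun p => {ψ : WeakDual ℂ A | (ψ p.1.1).re ≤ β + 1 / (p.2 + 1)}
  have hZcl : ∀ p, IsClosed (Z p) := fun p =>
    isClosed_le ((Complex.continuous_re).comp (WeakDual.eval_continuous p.1.1)) continuous_const
  have hFIP : ∀ u : Finset ({b : A // b ∈ DixE A (unitary A : Set A) a} × ℕ),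
      (closure T ∩ ⋂ p ∈ u, Z p).Nonempty := by
    intro u
    rcases u.eq_empty_or_nonempty with rfl | hu
    · refine ⟨StrongDual.toWeakDual φ, ?_, by simp⟩
      refine subset_closure ?_
      refine mem_image_of_mem _ ?_
      have := subset_convexHull ℝ ((fun u => conjF A u φ) '' (unitary A : Set A))
        (mem_image_of_mem _ (one_mem (unitary A)))
      rwa [conjF_one] at this
    · set εu : ℝ := (u.image fun p => 1 / ((p.2 : ℝ) + 1)).min' (hu.image _) with hεu
      have hεupos : 0 < εu := by
        obtain ⟨w, hw, hwe⟩ := Finset.mem_image.mp ((u.image fun p => 1 / ((p.2 : ℝ) + 1)).min'_mem (hu.image _))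
        rw [hεu, ← hwe]
        positivity
      have hε : 0 < εu / (‖φ‖ + 1) := by positivity
      obtain ⟨γ, hγ⟩ := sim_dixmier hDP u (fun p => p.1.1) (fun p _ => p.1.2) hε
      refine ⟨StrongDual.toWeakDual (φ.comp γ.clm), subset_closure
        (mem_image_of_mem _ (comp_mem_hull φ γ)), ?_⟩
      rw [Set.mem_iInter₂]
      intro p hp
      obtain ⟨z, hzD, hzC, hzn⟩ := hγ p hp
      show ((φ.comp γ.clm) p.1.1).re ≤ β + 1 / (p.2 + 1)
      have h1 : φ (γ.clm p.1.1) = φ z + φ (γ.clm p.1.1 - z) := by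
        rw [map_sub]; ring
      have h2 : (φ z).re ≤ β := le_csSup hbdd ⟨z, ⟨hzD, hzC⟩, rfl⟩
      have h3 : (φ (γ.clm p.1.1 - z)).re ≤ ‖φ‖ * (εu / (‖φ‖ + 1)) := by
        calc (φ (γ.clm p.1.1 - z)).re ≤ ‖φ (γ.clm p.1.1 - z)‖ := Complex.re_le_norm _
          _ ≤ ‖φ‖ * ‖γ.clm p.1.1 - z‖ := φ.le_opNorm _
          _ ≤ ‖φ‖ * (εu / (‖φ‖ + 1)) :=
            mul_le_mul_of_nonneg_left hzn.le (norm_nonneg φ)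
      have h4 : ‖φ‖ * (εu / (‖φ‖ + 1)) < εu := by
        rw [mul_div_assoc']
        rw [div_lt_iff₀ (by positivity)]
        nlinarith [norm_nonneg φ, hεupos]
      have h5 : εu ≤ 1 / ((p.2 : ℝ) + 1) :=
        Finset.min'_le _ _ (Finset.mem_image_of_mem _ hp)
      have h6 : ((φ.comp γ.clm) p.1.1).re = (φ (γ.clm p.1.1)).re := rfl
      rw [h6, h1, Complex.add_re]
      linarith
  obtain ⟨ψs, hψK, hψZ⟩ := hclT.inter_iInter_nonempty Z hZcl hFIP
  have hψb : ∀ b', b' ∈ DixE A (unitary A : Set A) a → (ψs b').re ≤ β := by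
    intro b' hb'
    by_contra hlt
    push_neg at hlt
    obtain ⟨n, hn⟩ := exists_nat_one_div_lt (sub_pos.mpr hlt)
    have := Set.mem_iInter.mp hψZ (⟨b', hb'⟩, n)
    have h7 : (ψs b').re ≤ β + 1 / ((n : ℝ) + 1) := this
    linarith
  -- apply maximal mixedness
  set ψ' : A →L[ℂ] ℂ := WeakDual.toStrongDual ψs with hψ'
  have hmemDix : ψ' ∈ Dix A φ := hψK
  have hφψ : φ ∈ Dix A ψ' := hmm ψ' hmemDix
  have hcont : Continuous (fun χ : WeakDual ℂ A => (χ a).re) :=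
    Complex.continuous_re.comp (WeakDual.eval_continuous a)
  have hmap : MapsTo (fun χ : WeakDual ℂ A => (χ a).re)
      (StrongDual.toWeakDual ''
        (convexHull ℝ ((fun u => conjF A u ψ') '' (unitary A : Set A)))) (Iic β) := by
    rintro _ ⟨χ, hχ, rfl⟩
    obtain ⟨γ, rfl⟩ := exists_avg_functional hχ
    show (ψ' (γ.clm a)).re ≤ β
    exact hψb _ (avg_mem_DixE γ (self_mem_DixE a))
  have := map_mem_closure hcont (mem_closure_of_mem_Dix hφψ) hmap
  rwa [isClosed_Iic.closure_eq] at this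

/-! ### The backward direction -/

lemma backward
    (hDP : ∀ x : A, ∃ z ∈ DixE A (unitary A : Set A) x, z ∈ Subalgebra.center ℂ A)
    (φ : A →L[ℂ] ℂ) (hφ : IsPos A φ)
    (h : ∀ a : A, (∃ x : A, a = star x * x) →
        (φ a).re ≤ sSup ((fun z => (φ z).re) ''
          (DixE A (unitary A : Set A) a ∩ (Subalgebra.center ℂ A : Set A)))) :
    MaxMixed A φ := by
  intro ψ hψ
  by_contra hc
  letI : Module ℝ (WeakDual ℂ A) := WeakDual.instModule' ℝ
  haveI : LocallyConvexSpace ℝ (WeakDual ℂ A) := WeakBilin.locallyConvexSpace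
  have hψpos : IsPos A ψ := Dix_isPos hφ hψ
  set S : Set (WeakDual ℂ A) := StrongDual.toWeakDual ''
    (convexHull ℝ ((fun u => conjF A u ψ) '' (unitary A : Set A))) with hS
  have hSconv : Convex ℝ S :=
    (convex_convexHull ℝ _).is_linear_image ⟨fun _ _ => rfl, fun _ _ => rfl⟩
  have hc' : (StrongDual.toWeakDual φ : WeakDual ℂ A) ∉ closure S := hc
  obtain ⟨f, u, hfs, hfφ⟩ := RCLike.geometric_hahn_banach_closed_point (𝕜 := ℂ)
    hSconv.closure isClosed_closure hc'
  obtain ⟨a₀, hf⟩ := exists_eval_eq f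
  have hsep : ∀ χ : A →L[ℂ] ℂ,
      χ ∈ convexHull ℝ ((fun u => conjF A u ψ) '' (unitary A : Set A)) → (χ a₀).re < u := by
    intro χ hχ
    have h1 := hfs (StrongDual.toWeakDual χ) (subset_closure (mem_image_of_mem _ hχ))
    rw [hf] at h1
    simpa using h1
  have hφgt : u < (φ a₀).re := by
    have h1 := hfφ
    rw [hf] at h1
    simpa using h1
  -- the selfadjoint real part of `a₀`
  set b : A := (2⁻¹ : ℂ) • (a₀ + star a₀) with hbdef
  have hbsa : IsSelfAdjoint b := by
    rw [hbdef, IsSelfAdjoint, star_smul, star_add, star_star, add_comm (star a₀) a₀]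
    congr 1
    simp [Complex.ext_iff]
  set c : A := algebraMap ℝ A ‖b‖ + b with hcdef
  obtain ⟨x, hx⟩ := exists_star_mul_self_eq hbsa
  have hsup := h c ⟨x, hx.symm⟩
  -- every central element of `D(c)` has `φ`-value at most `u + ‖b‖ (ψ 1).re`
  have halg : ∀ χ : A →L[ℂ] ℂ, (χ (algebraMap ℝ A ‖b‖)).re = ‖b‖ * (χ 1).re := by
    intro χ
    rw [Algebra.algebraMap_eq_smul_one, ContinuousLinearMap.map_smul_of_tower,
      Complex.smul_re, smul_eq_mul]
  have hH : DixE A (unitary A : Set A) c ⊆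
      {y : A | (ψ y).re ≤ u + ‖b‖ * (ψ 1).re} := by
    refine closure_minimal (convexHull_min ?_ ?_) ?_
    · rintro _ ⟨v, hv, rfl⟩
      show (ψ (v * c * star v)).re ≤ u + ‖b‖ * (ψ 1).re
      have h2 : v * c * star v = algebraMap ℝ A ‖b‖ + v * b * star v := by
        rw [hcdef, mul_add, add_mul, Algebra.algebraMap_eq_smul_one, mul_smul_comm, mul_one,
          smul_mul_assoc, Unitary.mul_star_self_of_mem hv]
      rw [h2, map_add, Complex.add_re, halg ψ]
      have h3 : (ψ (v * b * star v)).re = (conjF A v ψ b).re := rfl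
      have h4 : (conjF A v ψ b).re = (conjF A v ψ a₀).re := by
        rw [hbdef]
        exact (isPos_re_apply_eq (conjF_isPos hψpos v) a₀).symm
      have h5 : (conjF A v ψ a₀).re < u :=
        hsep _ (subset_convexHull ℝ _ (mem_image_of_mem _ hv))
      rw [h3, h4]
      linarith
    · intro p hp q hq a' b' ha' hb' hab
      simp only [Set.mem_setOf_eq] at hp hq ⊢
      rw [map_add, ContinuousLinearMap.map_smul_of_tower, ContinuousLinearMap.map_smul_of_tower,
        Complex.add_re, Complex.smul_re, Complex.smul_re, smul_eq_mul, smul_eq_mul]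
      have h6 := add_le_add (mul_le_mul_of_nonneg_left hp ha')
        (mul_le_mul_of_nonneg_left hq hb')
      rw [← add_mul, hab, one_mul] at h6
      linarith
    · exact isClosed_le (Complex.continuous_re.comp ψ.continuous) continuous_const
  have hball : ∀ z ∈ DixE A (unitary A : Set A) c ∩ (Subalgebra.center ℂ A : Set A),
      (φ z).re ≤ u + ‖b‖ * (ψ 1).re := by
    rintro z ⟨hz1, hz2⟩
    have h7 : ψ z = φ z := Dix_agree_center hψ hz2
    rw [← h7]
    exact hH hz1
  have hne : ((fun z => (φ z).re) ''
      (DixE A (unitary A : Set A) c ∩ (Subalgebra.center ℂ A : Set A))).Nonempty := by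
    obtain ⟨z₀, hz₀D, hz₀C⟩ := hDP c
    exact ⟨(φ z₀).re, ⟨z₀, ⟨hz₀D, hz₀C⟩, rfl⟩⟩
  have hsSup : sSup ((fun z => (φ z).re) ''
      (DixE A (unitary A : Set A) c ∩ (Subalgebra.center ℂ A : Set A)))
      ≤ u + ‖b‖ * (ψ 1).re := by
    refine csSup_le hne ?_
    rintro _ ⟨z, hz, rfl⟩
    exact hball z hz
  have hφc : (φ c).re = ‖b‖ * (φ 1).re + (φ b).re := by
    rw [hcdef, map_add, Complex.add_re, halg φ]
  have hφ1 : ψ 1 = φ 1 := Dix_agree_center hψ (one_mem (Subalgebra.center ℂ A))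
  have hφb : (φ a₀).re = (φ b).re := by
    rw [hbdef]
    exact isPos_re_apply_eq hφ a₀
  rw [hφc] at hsup
  rw [hφ1] at hsSup
  have : (φ b).re ≤ u := by linarith [hsup.trans hsSup]
  linarith [hφgt, hφb ▸ this]

end Aux17

/-- Let `A` be a unital C*-algebra with the Dixmier property and let
`φ ∈ A*₊`.  Then `φ` is maximally mixed iff `φ(a) ≤ sup {φ(z) : z ∈ D_A(a) ∩ Z(A)}`
for every positive `a ∈ A` (positive elements are those of the form `x*x`; the values
of `φ` on them are real, and are compared via their real parts). -/
theorem stmt17 (A : Type*) [CStarAlgebra A]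
    (hDP : ∀ a : A, ∃ z ∈ DixE A (unitary A : Set A) a, z ∈ Subalgebra.center ℂ A)
    (φ : A →L[ℂ] ℂ) (hφ : IsPos A φ) :
    MaxMixed A φ ↔
      ∀ a : A, (∃ x : A, a = star x * x) →
        (φ a).re ≤ sSup ((fun z => (φ z).re) ''
          (DixE A (unitary A : Set A) a ∩ (Subalgebra.center ℂ A : Set A))) := by
  constructor
  · intro hmm a _
    exact Aux17.forward hDP φ hmm a
  · intro h
    exact Aux17.backward hDP φ hφ h
end
end
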